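/- Suppose the graph is strongly connected and the intervals are pairwise disjoint with p_1 < p_2 < … < p_n (hence q_1 < … < q_n). Then along any solution, lim sup_{t→∞} max_i x_i(t) ≤ p_n and lim inf_{t→∞} min_i x_i(t) ≥ q_1; in particular every trajectory converges to the set [q_1, p_n]^n. -/

import Mathlib

open Finset Filter

/-- Saturation of `z` onto the interval `[p, q]`. -/
noncomputable def sat (p q z : ℝ) : ℝ := max p (min z q)

section Helpers
open Set Real
open scoped Topology

lemma sat_le_max (p q z : ℝ) : sat p q z ≤ max p z :=
  max_le_max le_rfl (min_le_left _ _)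

lemma sat_le_q (p q z : ℝ) (h : p ≤ q) : sat p q z ≤ q :=
  max_le h (min_le_right _ _)

lemma sat_neg (p q z : ℝ) (h : p ≤ q) : sat (-q) (-p) (-z) = - sat p q z := by
  unfold sat
  rcases le_total z p with h1 | h1 <;> rcases le_total z q with h2 | h2 <;>
    simp [min_def, max_def] <;> split_ifs <;> linarith

lemma freq_slope {f : ℝ → ℝ} {d t r : ℝ} (hf : HasDerivAt f d t) (h : d < r) :
    ∀ᶠ z in 𝓝[>] t, f z < f t + r * (z - t) := by
  have hs : Tendsto (slope f t) (𝓝[>] t) (𝓝 d) :=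
    (hasDerivAt_iff_tendsto_slope.1 hf).mono_left
      (nhdsWithin_mono t fun z hz => ne_of_gt hz)
  filter_upwards [hs.eventually_lt_const h, self_mem_nhdsWithin] with z hz hz'
  rw [slope_def_field] at hz
  have hzt : (0:ℝ) < z - t := sub_pos.2 hz'
  have := (div_lt_iff₀ hzt).1 hz
  linarith [this]

lemma liminf_slope {f d : ℝ → ℝ} (hf : ∀ t, HasDerivAt f (d t) t) (s r : ℝ) (h : d s < r) :
    ∃ᶠ z in 𝓝[>] s, (z - s)⁻¹ * (f z - f s) < r := by
  refine Filter.Eventually.frequently ?_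
  filter_upwards [freq_slope (hf s) h, self_mem_nhdsWithin] with z hz hz'
  have hzt : (0:ℝ) < z - s := sub_pos.2 hz'
  rw [inv_mul_eq_div, div_lt_iff₀ hzt]
  linarith

lemma scalar_gronwall {f d : ℝ → ℝ} (hf : ∀ t, HasDerivAt f (d t) t) (K ε t0 : ℝ)
    (hb : ∀ t, t0 ≤ t → d t ≤ -K * f t + ε) :
    ∀ t, t0 ≤ t → f t ≤ gronwallBound (f t0) (-K) ε (t - t0) := by
  intro t ht
  have hc : Continuous f := by
    rw [continuous_iff_continuousAt]; exact fun s => (hf s).continuousAt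
  exact le_gronwallBound_of_liminf_deriv_right_le (f' := d) hc.continuousOn
    (fun s hs r hr => liminf_slope hf s r hr) le_rfl
    (fun s hs => hb s hs.1) t ⟨ht, le_rfl⟩


lemma gronwall_tendsto (δ K ε : ℝ) (hK : 0 < K) (t1 : ℝ) :
    Tendsto (fun t => gronwallBound δ (-K) ε (t - t1)) atTop (𝓝 (ε / K)) := by
  have h1 : Tendsto (fun t : ℝ => t - t1) atTop atTop := tendsto_atTop_add_const_right _ _ tendsto_id
  have h2 : Tendsto (fun s : ℝ => Real.exp (-K * s)) atTop (𝓝 0) := by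
    apply Real.tendsto_exp_atBot.comp
    have := tendsto_neg_atTop_atBot.comp ((tendsto_const_mul_atTop_of_pos hK).2 (tendsto_id (α := ℝ)))
    apply tendsto_atBot_mono (fun s => le_of_eq (by simp [Function.comp, neg_mul])) this
  have h3 : Tendsto (fun s : ℝ => gronwallBound δ (-K) ε s) atTop (𝓝 (ε / K)) := by
    rw [gronwallBound_of_K_ne_0 (neg_ne_zero.2 (ne_of_gt hK))]
    have h4 := ((h2.const_mul δ).add (((h2.sub_const 1).const_mul (ε / -K))))
    have : δ * 0 + ε / -K * (0 - 1) = ε / K := by field_simp; ring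
    rw [this] at h4
    exact h4
  exact h3.comp h1

section SupGronwall

variable {n : ℕ}

lemma sup_gronwall (x : ℝ → Fin (n+1) → ℝ) (D : ℝ → Fin (n+1) → ℝ)
    (hx : ∀ i t, HasDerivAt (fun s => x s i) (D t i) t)
    (C K t0 : ℝ) (hK : 0 ≤ K)
    (hb : ∀ t, t0 ≤ t → ∀ i, C ≤ x t i → (∀ j, x t j ≤ x t i) →
      D t i ≤ K * (C - x t i)) :
    ∀ t, t0 ≤ t →
      max C (Finset.univ.sup' Finset.univ_nonempty fun i => x t i) ≤
        gronwallBound (max C (Finset.univ.sup' Finset.univ_nonempty fun i => x t0 i))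
          (-K) (K * C) (t - t0) := by
  classical
  set φ : Option (Fin (n+1)) → ℝ → ℝ := fun o t => o.elim C (fun i => x t i) with hφ
  set g : ℝ → ℝ := fun t => Finset.univ.sup' Finset.univ_nonempty (fun o => φ o t) with hgdef
  have hcx : ∀ i, Continuous (fun t => x t i) := fun i =>
    continuous_iff_continuousAt.2 fun s => (hx i s).continuousAt
  have hcφ : ∀ o, Continuous (φ o) := by
    rintro (_ | i)
    · exact continuous_const
    · exact hcx i
  have hg : ∀ t, g t = max C (Finset.univ.sup' Finset.univ_nonempty fun i => x t i) := by
    intro t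
    apply le_antisymm
    · apply Finset.sup'_le
      rintro (_ | i) _
      · exact le_max_left _ _
      · exact le_trans (Finset.le_sup' (f := fun i => x t i) (Finset.mem_univ i)) (le_max_right _ _)
    · apply max_le
      · exact Finset.le_sup' (f := fun o => φ o t) (Finset.mem_univ none)
      · apply Finset.sup'_le
        intro i _
        exact Finset.le_sup' (f := fun o => φ o t) (Finset.mem_univ (some i))
  have hCg : ∀ t, C ≤ g t := fun t =>
    Finset.le_sup' (f := fun o => φ o t) (Finset.mem_univ none)
  have hcont : Continuous g :=
    Continuous.finset_sup'_apply Finset.univ_nonempty fun o _ => hcφ o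
  -- argmax set
  have hfilne : ∀ t, ((Finset.univ : Finset (Option (Fin (n+1)))).filter
      (fun o => φ o t = g t)).Nonempty := by
    intro t
    obtain ⟨o, ho, hsup⟩ := Finset.exists_mem_eq_sup' Finset.univ_nonempty (fun o => φ o t)
    exact ⟨o, Finset.mem_filter.2 ⟨ho, hsup.symm⟩⟩
  set Dφ : ℝ → Option (Fin (n+1)) → ℝ := fun t o => o.elim 0 (D t) with hDφ
  set g' : ℝ → ℝ := fun t =>
    ((Finset.univ : Finset (Option (Fin (n+1)))).filter (fun o => φ o t = g t)).sup'
      (hfilne t) (Dφ t) with hg'def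
  intro t ht
  rw [← hg t, ← hg t0]
  refine le_gronwallBound_of_liminf_deriv_right_le (f' := g') hcont.continuousOn
    ?_ le_rfl ?_ t ⟨ht, le_rfl⟩
  · -- liminf slope condition
    intro s hs r hr
    refine Filter.Eventually.frequently ?_
    have hall : ∀ o : Option (Fin (n+1)), ∀ᶠ z in 𝓝[>] s, φ o z < g s + r * (z - s) := by
      intro o
      by_cases hmem : φ o s = g s
      · have homem : o ∈ (Finset.univ : Finset (Option (Fin (n+1)))).filter
            (fun o => φ o s = g s) := Finset.mem_filter.2 ⟨Finset.mem_univ o, hmem⟩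
        have hDo : Dφ s o < r := lt_of_le_of_lt (Finset.le_sup' (Dφ s) homem) hr
        match o with
        | none =>
          have hr0 : (0:ℝ) < r := hDo
          filter_upwards [self_mem_nhdsWithin] with z hz
          have : (0:ℝ) < z - s := sub_pos.2 hz
          have : 0 < r * (z - s) := mul_pos hr0 this
          simp only [hφ, Option.elim] at hmem ⊢
          linarith
        | some i =>
          have := freq_slope (hx i s) hDo
          filter_upwards [this] with z hz
          simp only [hφ, Option.elim] at hmem ⊢
          linarith
      · have hlt : φ o s < g s :=
          lt_of_le_of_ne (Finset.le_sup' (f := fun o => φ o s) (Finset.mem_univ o)) hmem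
        set d := g s - φ o s with hd
        have hd0 : 0 < d := sub_pos.2 hlt
        have ev1 : ∀ᶠ z in 𝓝 s, φ o z < φ o s + d / 2 :=
          ((hcφ o).tendsto s).eventually_lt_const (by linarith)
        have ev2 : ∀ᶠ z in 𝓝 s, |r| * (z - s) < d / 2 := by
          have : Tendsto (fun z : ℝ => |r| * (z - s)) (𝓝 s) (𝓝 (|r| * (s - s))) :=
            (continuous_const.mul (continuous_id.sub continuous_const)).tendsto s
          simp only [sub_self, mul_zero] at this
          exact this.eventually_lt_const (by linarith)
        filter_upwards [nhdsWithin_le_nhds ev1, nhdsWithin_le_nhds ev2,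
          self_mem_nhdsWithin] with z h1 h2 hz
        have hzs : (0:ℝ) ≤ z - s := le_of_lt (sub_pos.2 hz)
        have : -(|r| * (z - s)) ≤ r * (z - s) := by
          rw [← neg_mul]
          exact mul_le_mul_of_nonneg_right (neg_abs_le r) hzs
        linarith
    have : ∀ᶠ z in 𝓝[>] s, ∀ o : Option (Fin (n+1)), φ o z < g s + r * (z - s) :=
      eventually_all.2 hall
    filter_upwards [this, self_mem_nhdsWithin] with z hz hz'
    have hgz : g z < g s + r * (z - s) := by
      rw [hgdef]
      exact (Finset.sup'_lt_iff Finset.univ_nonempty).2 fun o _ => hz o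
    have hzs : (0:ℝ) < z - s := sub_pos.2 hz'
    rw [inv_mul_eq_div, div_lt_iff₀ hzs]
    linarith
  · -- bound
    intro s hs
    apply Finset.sup'_le
    intro o ho
    have hmem := (Finset.mem_filter.1 ho).2
    match o with
    | none =>
      simp only [hDφ, Option.elim]
      simp only [hφ, Option.elim] at hmem
      nlinarith [hK, hmem]
    | some i =>
      simp only [hφ, Option.elim] at hmem
      have hCi : C ≤ x s i := hmem ▸ hCg s
      have hmax : ∀ j, x s j ≤ x s i := by
        intro j
        rw [hmem]
        exact Finset.le_sup' (f := fun o => φ o s) (Finset.mem_univ (some j))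
      have h5 := hb s hs.1 i hCi hmax
      rw [hmem, mul_sub] at h5
      simp only [hDφ, Option.elim]
      linarith


end SupGronwall

lemma exists_edge {α : Type*} {r : α → α → Prop} {i j : α}
    (h : Relation.ReflTransGen r i j) : i ≠ j → ∃ u, u ≠ j ∧ r u j := by
  induction h with
  | refl => exact fun h => absurd rfl h
  | @tail b c hab hbc ih =>
    intro hij
    by_cases hbc' : b = c
    · subst hbc'; exact ih hij
    · exact ⟨b, hbc', hbc⟩

lemma upper (n : ℕ) (hn : 1 ≤ n)
    (a : Fin (n + 1) → Fin (n + 1) → ℝ) (ha : ∀ i j, 0 ≤ a i j)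
    (hSC : ∀ i j : Fin (n + 1), Relation.ReflTransGen (fun u v => 0 < a v u) i j)
    (p q : Fin (n + 1) → ℝ) (hpq : ∀ m, p m ≤ q m)
    (hpmono : StrictMono p) (hqmono : StrictMono q)
    (hdisj : ∀ i j : Fin (n + 1), i < j → q i < p j)
    (x : ℝ → Fin (n + 1) → ℝ)
    (hx : ∀ i t, HasDerivAt (fun s => x s i)
      (∑ j, a i j * (sat (p j) (q j) (x t j) - x t i)) t) :
    ∀ ε > (0 : ℝ), ∀ᶠ t in atTop, ∀ i, x t i ≤ p (Fin.last n) + ε := by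
  classical
  intro ε hε
  set N : Fin (n+1) := Fin.last n with hN
  set P : ℝ := p N with hP
  set D : ℝ → Fin (n+1) → ℝ := fun t i => ∑ j, a i j * (sat (p j) (q j) (x t j) - x t i)
    with hD
  have hxD : ∀ i t, HasDerivAt (fun s => x s i) (D t i) t := hx
  set F : ℝ → ℝ := fun t => Finset.univ.sup' Finset.univ_nonempty fun i => x t i with hF
  set f : ℝ → ℝ := fun t => max P (F t) with hf
  have hxf : ∀ t i, x t i ≤ f t := fun t i =>
    le_trans (Finset.le_sup' (f := fun i => x t i) (Finset.mem_univ i)) (le_max_right _ _)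
  have hPf : ∀ t, P ≤ f t := fun t => le_max_left _ _
  have hn1 : n - 1 < n + 1 := by omega
  set J : Fin (n+1) := ⟨n-1, hn1⟩ with hJ
  have hJN : J < N := by
    rw [Fin.lt_def, hJ, hN, Fin.val_last]
    simp only
    omega
  set Q' : ℝ := q J with hQ'
  have hQ'P : Q' < P := hdisj J N hJN
  have hsat_ne : ∀ j : Fin (n+1), j ≠ N → ∀ z, sat (p j) (q j) z ≤ Q' := by
    intro j hj z
    refine le_trans (sat_le_q _ _ _ (hpq j)) (hqmono.monotone ?_)
    rw [Fin.le_def, hJ]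
    have h1 : (j:ℕ) < n + 1 := j.isLt
    have h2 : (j:ℕ) ≠ n := by
      intro h
      exact hj (Fin.ext (by rw [h, hN, Fin.val_last]))
    simp only
    omega
  have hsatf : ∀ t j, sat (p j) (q j) (x t j) ≤ f t := by
    intro t j
    refine le_trans (sat_le_max _ _ _) (max_le ?_ (hxf t j))
    exact le_trans (hpmono.monotone (Fin.le_last j)) (hPf t)
  -- Stage 1 : f is antitone
  have hanti : ∀ t0 t, t0 ≤ t → f t ≤ f t0 := by
    intro t0 t ht
    have hb : ∀ t, t0 ≤ t → ∀ i, P ≤ x t i → (∀ j, x t j ≤ x t i) →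
        D t i ≤ 0 * (P - x t i) := by
      intro s hs i hPi hmax
      rw [zero_mul]
      apply Finset.sum_nonpos
      intro j _
      apply mul_nonpos_of_nonneg_of_nonpos (ha i j)
      have h1 : sat (p j) (q j) (x s j) ≤ x s i := by
        refine le_trans (sat_le_max _ _ _) (max_le ?_ (hmax j))
        exact le_trans (hpmono.monotone (Fin.le_last j)) hPi
      linarith
    have h2 := sup_gronwall x D hxD P 0 t0 le_rfl hb t ht
    rw [neg_zero, zero_mul, gronwallBound_K0] at h2
    simp only [zero_mul, add_zero] at h2
    exact h2
  have hbdd : BddBelow (Set.range f) := ⟨P, by rintro _ ⟨t, rfl⟩; exact hPf t⟩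
  set L : ℝ := ⨅ t, f t with hL
  have hLle : ∀ t, L ≤ f t := fun t => ciInf_le hbdd t
  have hPL : P ≤ L := le_ciInf hPf
  have hexists : ∀ η, 0 < η → ∃ t0, f t0 < L + η := by
    intro η hη
    exact exists_lt_of_ciInf_lt (lt_add_of_pos_right _ hη)
  -- graph quantities
  set A : Fin (n+1) → ℝ := fun i => ∑ j, a i j with hA
  haveI : Nontrivial (Fin (n+1)) := by
    refine ⟨⟨0, N, ?_⟩⟩
    intro h
    have h' := congrArg Fin.val h
    simp only [Fin.val_zero, hN, Fin.val_last] at h'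
    omega
  have hApos : ∀ i, 0 < A i := by
    intro i
    obtain ⟨j, hj⟩ := exists_ne i
    obtain ⟨u, hu, hau⟩ := exists_edge (hSC j i) hj
    exact lt_of_lt_of_le hau (Finset.single_le_sum (fun k _ => ha i k) (Finset.mem_univ u))
  set Amin : ℝ := Finset.univ.inf' Finset.univ_nonempty A with hAminDef
  have hAmin : 0 < Amin := by
    rw [hAminDef, Finset.lt_inf'_iff]
    exact fun i _ => hApos i
  set B : ℝ := ∑ j ∈ Finset.univ.erase N, a N j with hB
  have hBpos : 0 < B := by
    have h0N : (0 : Fin (n+1)) ≠ N := by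
      intro h
      have h' := congrArg Fin.val h
      simp only [Fin.val_zero, hN, Fin.val_last] at h'
      omega
    obtain ⟨u, hu, hau⟩ := exists_edge (hSC 0 N) h0N
    exact lt_of_lt_of_le hau (Finset.single_le_sum (fun k _ => ha N k)
      (Finset.mem_erase.2 ⟨hu, Finset.mem_univ u⟩))
  have hAN : A N = a N N + B := by
    rw [hA, hB]
    exact (Finset.add_sum_erase _ (a N) (Finset.mem_univ N)).symm
  -- main claim : L ≤ P
  have hLP : L ≤ P := by
    by_contra hc
    push_neg at hc
    have hLQ' : Q' < L := lt_trans hQ'P hc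
    set η : ℝ := min ((L - P)/2) (B * (L - Q') / (4 * A N)) with hηdef
    have hη : 0 < η := by
      apply lt_min
      · linarith
      · exact div_pos (mul_pos hBpos (by linarith)) (by linarith [hApos N])
    obtain ⟨t0, ht0⟩ := hexists η hη
    set εN : ℝ := a N N * (L + η) + B * Q' with hεN
    have hDN : ∀ s, t0 ≤ s → D s N ≤ -(A N) * x s N + εN := by
      intro s hs
      have hft : f s ≤ f t0 := hanti t0 s hs
      have hsum : D s N = (∑ j, a N j * sat (p j) (q j) (x s j)) - A N * x s N := by
        rw [hD, hA]
        simp only [mul_sub]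
        rw [Finset.sum_sub_distrib, ← Finset.sum_mul]
      have hsplit : (∑ j, a N j * sat (p j) (q j) (x s j)) =
          a N N * sat (p N) (q N) (x s N) +
            ∑ j ∈ Finset.univ.erase N, a N j * sat (p j) (q j) (x s j) :=
        (Finset.add_sum_erase _ _ (Finset.mem_univ N)).symm
      have h1 : a N N * sat (p N) (q N) (x s N) ≤ a N N * (L + η) := by
        apply mul_le_mul_of_nonneg_left _ (ha N N)
        calc sat (p N) (q N) (x s N) ≤ f s := hsatf s N
          _ ≤ f t0 := hft
          _ ≤ L + η := le_of_lt ht0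
      have h2 : ∑ j ∈ Finset.univ.erase N, a N j * sat (p j) (q j) (x s j) ≤
          ∑ j ∈ Finset.univ.erase N, a N j * Q' := by
        apply Finset.sum_le_sum
        intro j hj
        exact mul_le_mul_of_nonneg_left (hsat_ne j (Finset.ne_of_mem_erase hj) _) (ha N j)
      have h2' : ∑ j ∈ Finset.univ.erase N, a N j * Q' = B * Q' := by
        rw [hB, Finset.sum_mul]
      rw [hsum]
      rw [hsplit]
      rw [h2'] at h2
      rw [hεN]
      have : -(A N) * x s N = -(A N * x s N) := by ring
      linarith
    have hgr := scalar_gronwall (f := fun t => x t N) (d := fun t => D t N)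
      (fun t => hxD N t) (A N) εN t0 hDN
    have htd := gronwall_tendsto (x t0 N) (A N) εN (hApos N) t0
    have hev1 : ∀ᶠ t in atTop,
        gronwallBound (x t0 N) (-(A N)) εN (t - t0) < εN / A N + η :=
      htd.eventually_lt_const (lt_add_of_pos_right _ hη)
    obtain ⟨t1, ht1⟩ := eventually_atTop.1 (hev1.and (eventually_ge_atTop t0))
    have hxN : ∀ t, t1 ≤ t → x t N ≤ εN / A N + η := by
      intro t ht
      exact le_trans (hgr t (ht1 t ht).2) (le_of_lt (ht1 t ht).1)
    set c : ℝ := εN / A N with hc'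
    set C2 : ℝ := max P (c + η) with hC2
    have hPC2 : P ≤ C2 := le_max_left _ _
    have hPηL : P + η < L := by
      have := min_le_left ((L - P)/2) (B * (L - Q') / (4 * A N))
      rw [← hηdef] at this
      linarith
    have hc2L : c + 2*η < L := by
      have hmin := min_le_right ((L - P)/2) (B * (L - Q') / (4 * A N))
      rw [← hηdef] at hmin
      have hANpos := hApos N
      have hηA : η * (4 * A N) ≤ B * (L - Q') :=
        (le_div_iff₀ (by linarith : (0:ℝ) < 4 * A N)).1 hmin
      have hηA' : η * (4 * (a N N + B)) ≤ B * (L - Q') := by rw [← hAN]; exact hηA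
      have hgoal : εN < (L - 2*η) * A N := by
        rw [hεN, hAN]
        nlinarith [mul_pos hη hBpos, mul_nonneg (le_of_lt hη) (ha N N), hηA']
      have := (div_lt_iff₀ hANpos).2 hgoal
      rw [hc']
      linarith
    -- second decay
    have hb2 : ∀ s, t1 ≤ s → ∀ i, C2 ≤ x s i → (∀ j, x s j ≤ x s i) →
        D s i ≤ Amin * (C2 - x s i) := by
      intro s hs i hC2i _
      have hsatC2 : ∀ j, sat (p j) (q j) (x s j) ≤ C2 := by
        intro j
        by_cases hj : j = N
        · subst hj
          refine le_trans (sat_le_max _ _ _) (max_le hPC2 ?_)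
          calc x s N ≤ c + η := hxN s hs
            _ ≤ C2 := le_max_right _ _
        · exact le_trans (hsat_ne j hj _) (le_trans (le_of_lt hQ'P) hPC2)
      have hstep : D s i ≤ A i * (C2 - x s i) := by
        rw [hD, hA, Finset.sum_mul]
        apply Finset.sum_le_sum
        intro j _
        exact mul_le_mul_of_nonneg_left (by linarith [hsatC2 j]) (ha i j)
      have hAi : Amin ≤ A i := Finset.inf'_le _ (Finset.mem_univ i)
      have hC2x : C2 - x s i ≤ 0 := by linarith
      calc D s i ≤ A i * (C2 - x s i) := hstep
        _ ≤ Amin * (C2 - x s i) := mul_le_mul_of_nonpos_right hAi hC2x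
    have hgr2 := sup_gronwall x D hxD C2 Amin t1 (le_of_lt hAmin) hb2
    have htd2 := gronwall_tendsto (max C2 (Finset.univ.sup' Finset.univ_nonempty
      fun i => x t1 i)) Amin (Amin * C2) hAmin t1
    rw [mul_div_cancel_left₀ _ (ne_of_gt hAmin)] at htd2
    have hev2 : ∀ᶠ t in atTop, gronwallBound (max C2 (Finset.univ.sup' Finset.univ_nonempty
        fun i => x t1 i)) (-Amin) (Amin * C2) (t - t1) < C2 + η :=
      htd2.eventually_lt_const (lt_add_of_pos_right _ hη)
    obtain ⟨t2, ht2⟩ := eventually_atTop.1 (hev2.and (eventually_ge_atTop t1))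
    have hft2 : f t2 < C2 + η := by
      calc f t2 ≤ max C2 (F t2) := max_le_max hPC2 le_rfl
        _ ≤ _ := hgr2 t2 (ht2 t2 le_rfl).2
        _ < C2 + η := (ht2 t2 le_rfl).1
    have hC2ηL : C2 + η < L := by
      rw [hC2]
      rcases max_cases P (c + η) with ⟨h, _⟩ | ⟨h, _⟩ <;> rw [h] <;> linarith
    linarith [hLle t2]
  -- conclusion
  obtain ⟨t0, ht0⟩ := hexists ε hε
  rw [eventually_atTop]
  refine ⟨t0, fun t ht i => ?_⟩
  have h1 := hanti t0 t ht
  have h2 := hxf t i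
  have h3 : f t0 < P + ε := by linarith
  linarith


theorem trajectories_converge_to_middle_cube
    (n : ℕ) (hn : 1 ≤ n)
    (a : Fin (n + 1) → Fin (n + 1) → ℝ) (ha : ∀ i j, 0 ≤ a i j)
    (hSC : ∀ i j : Fin (n + 1), Relation.ReflTransGen (fun u v => 0 < a v u) i j)
    (p q : Fin (n + 1) → ℝ) (hpq : ∀ m, p m ≤ q m)
    (hpmono : StrictMono p) (hqmono : StrictMono q)
    (hdisj : ∀ i j : Fin (n + 1), i < j → q i < p j)
    (x : ℝ → Fin (n + 1) → ℝ)
    (hx : ∀ i t, HasDerivAt (fun s => x s i)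
      (∑ j, a i j * (sat (p j) (q j) (x t j) - x t i)) t) :
    ∀ ε > (0 : ℝ), ∀ᶠ t in atTop,
      (∀ i, x t i ≤ p (Fin.last n) + ε) ∧ (∀ i, q 0 - ε ≤ x t i) := by
  intro ε hε
  have hupper := upper n hn a ha hSC p q hpq hpmono hqmono hdisj x hx ε hε
  -- reversed / negated system for the lower bound
  set x' : ℝ → Fin (n+1) → ℝ := fun t i => -(x t i.rev) with hx'def
  set a' : Fin (n+1) → Fin (n+1) → ℝ := fun i j => a i.rev j.rev with ha'def
  set p' : Fin (n+1) → ℝ := fun i => -q i.rev with hp'def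
  set q' : Fin (n+1) → ℝ := fun i => -p i.rev with hq'def
  have ha' : ∀ i j, 0 ≤ a' i j := fun i j => ha _ _
  have hSC' : ∀ i j : Fin (n+1), Relation.ReflTransGen (fun u v => 0 < a' v u) i j := by
    intro i j
    have h := Relation.ReflTransGen.lift (p := fun u v : Fin (n+1) => 0 < a' v u) Fin.rev
      (fun u v h => by simpa [ha'def, Fin.rev_rev, Function.onFun] using h) _ _ (hSC i.rev j.rev)
    simpa [Fin.rev_rev, Function.onFun] using h
  have hpq' : ∀ m, p' m ≤ q' m := fun m => by
    simp only [hp'def, hq'def, neg_le_neg_iff]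
    exact hpq m.rev
  have hp'mono : StrictMono p' := by
    intro i j hij
    simp only [hp'def, neg_lt_neg_iff]
    exact hqmono (Fin.rev_lt_rev.2 hij)
  have hq'mono : StrictMono q' := by
    intro i j hij
    simp only [hq'def, neg_lt_neg_iff]
    exact hpmono (Fin.rev_lt_rev.2 hij)
  have hdisj' : ∀ i j : Fin (n+1), i < j → q' i < p' j := by
    intro i j hij
    simp only [hp'def, hq'def, neg_lt_neg_iff]
    exact hdisj j.rev i.rev (Fin.rev_lt_rev.2 hij)
  have hx' : ∀ i t, HasDerivAt (fun s => x' s i)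
      (∑ j, a' i j * (sat (p' j) (q' j) (x' t j) - x' t i)) t := by
    intro i t
    have h0 : HasDerivAt (fun s => x' s i)
        (-∑ j, a i.rev j * (sat (p j) (q j) (x t j) - x t i.rev)) t := (hx i.rev t).neg
    convert h0 using 1
    rw [← Finset.sum_neg_distrib]
    refine Fintype.sum_equiv (Function.Involutive.toPerm Fin.rev Fin.rev_rev) _ _ (fun j => ?_)
    simp only [Function.Involutive.coe_toPerm, ha'def, hp'def, hq'def, hx'def, Fin.rev_rev]
    rw [sat_neg _ _ _ (hpq j.rev)]
    change _ = -(a i.rev j.rev * (sat (p j.rev) (q j.rev) (x t j.rev) - x t i.rev))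
    ring
  have hlower := upper n hn a' ha' hSC' p' q' hpq' hp'mono hq'mono hdisj' x' hx' ε hε
  filter_upwards [hupper, hlower] with t h1 h2
  refine ⟨h1, fun i => ?_⟩
  have h3 := h2 i.rev
  simp only [hx'def, hp'def, Fin.rev_rev, Fin.rev_last] at h3
  linarith
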